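/- For any preparation map R, the co-interaction identity Δ M_R = (M_R ⊗ M_R⁺)Δ holds if and only if the identity Δ M_R^× = (M_R^× ⊗ M_R⁺)Δ holds. -/

import Mathlib

/-!
Abstract formalization of the algebraic setting of BHZ regularity structures
associated with a subcritical singular stochastic PDE (Bailleul–Bruned,
"Parametrization of renormalized models for singular stochastic PDEs").

`T` plays the role of `𝒯` (linear span of the set of decorated trees, which is
also closed under the tree product), with canonical basis `bT` indexed by `ι`
(the decorated trees), degree map `deg : ι → ℝ` and noise-counting map
`nXi : ι → ℕ`.  `Tp` plays the role of the Hopf algebra `𝒯⁺`, with canonical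
basis `bTp` indexed by `κ`, degree map `degp`, coproduct `Δp`, antipode `Sp`,
and multiplication map `ℳ⁺ = LinearMap.mul' ℝ Tp`.  `Δ : T →ₗ T ⊗ Tp` is the
co-action, `I a` (resp. `Ip a`) is the abstract integration map `𝓘_a` on `𝒯`
(resp. `𝓘⁺_a : 𝒯 → 𝒯⁺`), and `XTp k` (resp. `XT k`) is the monomial `X^k`
in `𝒯⁺` (resp. in `𝒯`).
-/

open scoped TensorProduct
attribute [local instance] Classical.propDecidable
noncomputable section

/-- Multi-indices `a ∈ ℕ^d`. -/
abbrev MIdx (d : ℕ) := Fin d → ℕ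

/-- `|a| := Σ_j a_j`. -/
def MIdx.nrm {d : ℕ} (a : MIdx d) : ℕ := ∑ j, a j

/-- `a! := Π_j (a_j)!`. -/
def MIdx.fact {d : ℕ} (a : MIdx d) : ℕ := ∏ j, Nat.factorial (a j)

/-- The map `(Id ⊗ ℳ⁺)(Δ ⊗ Id) : 𝒯 ⊗ 𝒯⁺ → 𝒯 ⊗ 𝒯⁺`. -/
def hatA {T Tp : Type} [CommRing T] [Algebra ℝ T] [CommRing Tp] [Algebra ℝ Tp]
    (Δ : T →ₗ[ℝ] T ⊗[ℝ] Tp) : T ⊗[ℝ] Tp →ₗ[ℝ] T ⊗[ℝ] Tp :=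
  (TensorProduct.map LinearMap.id (LinearMap.mul' ℝ Tp)) ∘ₗ
    (TensorProduct.assoc ℝ T Tp Tp).toLinearMap ∘ₗ
      (TensorProduct.map Δ LinearMap.id)

/-- A preparation map `R : 𝒯 → 𝒯`:  it fixes the polynomials, satisfies
`Rτ = τ + Σ_i λ_i τ_i` with finitely many trees `τ_i` of degree `≥ deg τ` and
strictly fewer noises, commutes with the co-action `Δ`, and satisfies
`R ∘ 𝓘_a = 𝓘_a`. -/
structure IsPreparation {d : ℕ} {T Tp : Type} [CommRing T] [Algebra ℝ T]
    [CommRing Tp] [Algebra ℝ Tp] {ι : Type} (bT : Module.Basis ι ℝ T)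
    (deg : ι → ℝ) (nXi : ι → ℕ) (isPoly : ι → Prop)
    (Δ : T →ₗ[ℝ] T ⊗[ℝ] Tp) (I : MIdx d → T →ₗ[ℝ] T)
    (R : T →ₗ[ℝ] T) : Prop where
  fix_poly : ∀ i, isPoly i → R (bT i) = bT i
  triangular : ∀ i, R (bT i) - bT i ∈
      Submodule.span ℝ {x : T | ∃ j, deg i ≤ deg j ∧ nXi j < nXi i ∧ x = bT j}
  comm_coaction : (TensorProduct.map R LinearMap.id) ∘ₗ Δ = Δ ∘ₗ R
  fix_integration : ∀ a, R ∘ₗ I a = I a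

/-- A preparation map is degree preserving if `Rτ = τ + Σ_i λ_i τ_i` with
`deg τ_i = deg τ` and `|τ_i|_Ξ < |τ|_Ξ`. -/
def DegreePreserving {T : Type} [CommRing T] [Algebra ℝ T] {ι : Type}
    (bT : Module.Basis ι ℝ T) (deg : ι → ℝ) (nXi : ι → ℕ) (R : T →ₗ[ℝ] T) : Prop :=
  ∀ i, R (bT i) - bT i ∈
    Submodule.span ℝ {x : T | ∃ j, deg j = deg i ∧ nXi j < nXi i ∧ x = bT j}

/-- For any preparation map `R`, the co-interaction identity
`Δ M_R = (M_R ⊗ M_R⁺)Δ` holds if and only if the identity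
`Δ M_R^× = (M_R^× ⊗ M_R⁺)Δ` holds.  (Recall that `R` is invertible by its
triangular structure, which is recorded here as a hypothesis.) -/
theorem cointeraction_iff_cointeraction_mult
    {d : ℕ} {T Tp : Type} [CommRing T] [Algebra ℝ T] [CommRing Tp] [Algebra ℝ Tp]
    {ι : Type} (bT : Module.Basis ι ℝ T)
    (deg : ι → ℝ) (nXi : ι → ℕ) (isPoly : ι → Prop)
    (Δ : T →ₗ[ℝ] T ⊗[ℝ] Tp)
    (I : MIdx d → T →ₗ[ℝ] T) (Ip : MIdx d → T →ₗ[ℝ] Tp) (XTp : MIdx d → Tp)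
    -- a preparation map `R`
    (R : T →ₗ[ℝ] T) (hR : IsPreparation bT deg nXi isPoly Δ I R)
    -- the multiplicative map `M_R^×`, with `M_R := M_R^× ∘ R`
    (MRx : T →ₐ[ℝ] T)
    (hMRx : ∀ (a : MIdx d) (τ : T), MRx (I a τ) = I a (MRx (R τ)))
    -- the maps `δ_R` and `M_R⁺` defined by `(Id ⊗ ℳ⁺)(Δ ⊗ Id)δ_R = (M_R ⊗ M_R⁺)Δ`
    (δR : T →ₗ[ℝ] T ⊗[ℝ] Tp) (MRp : Tp →ₐ[ℝ] Tp)
    (hMRpX : ∀ k, MRp (XTp k) = XTp k)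
    (hMRpI : ∀ (a : MIdx d) (τ : T), MRp (Ip a τ) =
      LinearMap.mul' ℝ Tp ((TensorProduct.map (Ip a) LinearMap.id) (δR τ)))
    (hδR : hatA Δ ∘ₗ δR =
      (TensorProduct.map (MRx.toLinearMap ∘ₗ R) MRp.toLinearMap) ∘ₗ Δ)
    (hRbij : Function.Bijective R) :
    (Δ ∘ₗ (MRx.toLinearMap ∘ₗ R) =
        (TensorProduct.map (MRx.toLinearMap ∘ₗ R) MRp.toLinearMap) ∘ₗ Δ) ↔
      (Δ ∘ₗ MRx.toLinearMap =
        (TensorProduct.map MRx.toLinearMap MRp.toLinearMap) ∘ₗ Δ) := by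
  -- Let `e` be the linear equivalence induced by the bijective map `R`.
  set e : T ≃ₗ[ℝ] T := LinearEquiv.ofBijective R hRbij with he
  have heR : ∀ x, e x = R x := fun _ => rfl
  have hRRinv : ∀ x, R (e.symm x) = x := fun x => by
    rw [← heR]; exact e.apply_symm_apply x
  have hcomm := hR.comm_coaction
  -- `Δ ∘ R⁻¹ = (R⁻¹ ⊗ Id) ∘ Δ`
  have h1 : ∀ y : T ⊗[ℝ] Tp,
      TensorProduct.map e.symm.toLinearMap (LinearMap.id : Tp →ₗ[ℝ] Tp)
        (TensorProduct.map R (LinearMap.id : Tp →ₗ[ℝ] Tp) y) = y := fun y => by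
    have : (TensorProduct.map e.symm.toLinearMap (LinearMap.id : Tp →ₗ[ℝ] Tp)) ∘ₗ
        (TensorProduct.map R (LinearMap.id : Tp →ₗ[ℝ] Tp)) = LinearMap.id := by
      rw [← TensorProduct.map_comp]
      have : e.symm.toLinearMap ∘ₗ R = LinearMap.id := by
        ext x; simp [← heR]
      rw [this, LinearMap.id_comp, TensorProduct.map_id]
    exact LinearMap.congr_fun this y
  have hcomm' : ∀ x, Δ (e.symm x) =
      TensorProduct.map e.symm.toLinearMap (LinearMap.id : Tp →ₗ[ℝ] Tp) (Δ x) := fun x => by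
    have h2 := LinearMap.congr_fun hcomm (e.symm x)
    simp only [LinearMap.comp_apply] at h2
    rw [hRRinv] at h2
    rw [← h2, h1]
  -- the two tensor-map composition identities
  have h3 : ∀ z : T ⊗[ℝ] Tp,
      TensorProduct.map (MRx.toLinearMap ∘ₗ R) MRp.toLinearMap
        (TensorProduct.map e.symm.toLinearMap (LinearMap.id : Tp →ₗ[ℝ] Tp) z) =
      TensorProduct.map MRx.toLinearMap MRp.toLinearMap z := fun z => by
    have : (TensorProduct.map (MRx.toLinearMap ∘ₗ R) MRp.toLinearMap) ∘ₗ
        (TensorProduct.map e.symm.toLinearMap (LinearMap.id : Tp →ₗ[ℝ] Tp)) =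
        TensorProduct.map MRx.toLinearMap MRp.toLinearMap := by
      rw [← TensorProduct.map_comp, LinearMap.comp_id]
      congr 1
      rw [LinearMap.comp_assoc]
      have : R ∘ₗ e.symm.toLinearMap = LinearMap.id := by
        ext x; exact hRRinv x
      rw [this, LinearMap.comp_id]
    exact LinearMap.congr_fun this z
  have h4 : ∀ z : T ⊗[ℝ] Tp,
      TensorProduct.map MRx.toLinearMap MRp.toLinearMap
        (TensorProduct.map R (LinearMap.id : Tp →ₗ[ℝ] Tp) z) =
      TensorProduct.map (MRx.toLinearMap ∘ₗ R) MRp.toLinearMap z := fun z => by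
    have : (TensorProduct.map MRx.toLinearMap MRp.toLinearMap) ∘ₗ
        (TensorProduct.map R (LinearMap.id : Tp →ₗ[ℝ] Tp)) =
        TensorProduct.map (MRx.toLinearMap ∘ₗ R) MRp.toLinearMap := by
      rw [← TensorProduct.map_comp, LinearMap.comp_id]
    exact LinearMap.congr_fun this z
  constructor
  · -- from `Δ M_R = (M_R ⊗ M_R⁺) Δ` to `Δ M_R^× = (M_R^× ⊗ M_R⁺) Δ`
    intro h
    ext τ
    have h' := LinearMap.congr_fun h (e.symm τ)
    simp only [LinearMap.comp_apply] at h' ⊢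
    rw [hRRinv, hcomm', h3] at h'
    exact h'
  · -- from `Δ M_R^× = (M_R^× ⊗ M_R⁺) Δ` to `Δ M_R = (M_R ⊗ M_R⁺) Δ`
    intro h
    ext τ
    have h' := LinearMap.congr_fun h (R τ)
    have h2 := LinearMap.congr_fun hcomm τ
    simp only [LinearMap.comp_apply] at h' h2 ⊢
    rw [← h2, h4] at h'
    exact h'
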